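/- Let r be a real number with 0 < r < d. The following are equivalent: (1) A ∈ W'_{(n−d+r)/(d−r)}(d, n−d); (2) there exist R_i → 0, a sequence t_i → ∞ and nonzero vectors v_i ∈ ℤ^n such that ‖b_{d·t_i} g_A v_i‖ ≤ R_i e^{−r t_i} for all i; (3) there exist C_i → 0, a sequence t_i → ∞ and nonzero vectors v_i ∈ ℤ^n such that sup_{ω∈Ω} ‖g_{t_i} ω g_A v_i‖ ≤ C_i e^{(d−r−1)t_i} for all i. -/

import Mathlib

open Matrix MeasureTheory Filter Topology

noncomputable section

abbrev SLn (n : ℕ) := Matrix.SpecialLinearGroup (Fin n) ℝ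

instance SLn.topologicalSpace (n : ℕ) : TopologicalSpace (SLn n) :=
  TopologicalSpace.induced (fun g => (g : Matrix (Fin n) (Fin n) ℝ)) inferInstance

/-- The diagonal flow `g_t = diag(e^{(n-1)t}, e^{-t}, …, e^{-t})`. -/
def gtFlow (n : ℕ) (hn : 0 < n) (t : ℝ) : SLn n :=
  ⟨Matrix.diagonal (fun i => if (i : ℕ) = 0 then Real.exp ((n - 1 : ℝ) * t) else Real.exp (-t)),
    by
      rcases Nat.exists_eq_succ_of_ne_zero hn.ne' with ⟨m, rfl⟩
      rw [Matrix.det_diagonal, Fin.prod_univ_succ]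
      have h1 : ∀ i : Fin m,
          (if ((i.succ : Fin (m+1)) : ℕ) = 0 then Real.exp (((m.succ : ℝ) - 1) * t)
            else Real.exp (-t)) = Real.exp (-t) := by
        intro i; simp [Fin.val_succ]
      rw [Finset.prod_congr rfl (fun i _ => h1 i)]
      simp only [Fin.val_zero, if_true, Finset.prod_const, Finset.card_univ,
        Fintype.card_fin, if_true]
      rw [← Real.exp_nat_mul, ← Real.exp_add]
      have h2 : ((m.succ : ℝ) - 1) * t + (m : ℝ) * -t = 0 := by push_cast; ring
      rw [h2, Real.exp_zero]⟩

/-- The unipotent element `u(v)` whose first row is `(1, v)`. -/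
def uv (n : ℕ) (v : Fin (n - 1) → ℝ) : SLn n :=
  ⟨Matrix.of fun i j =>
      if i = j then 1
      else if hij : (i : ℕ) = 0 ∧ (j : ℕ) ≠ 0 then v ⟨(j : ℕ) - 1, by have := j.isLt; omega⟩
      else 0,
    by
      have h := Matrix.det_of_upperTriangular (M := Matrix.of fun i j : Fin n =>
        if i = j then (1:ℝ)
        else if hij : (i : ℕ) = 0 ∧ (j : ℕ) ≠ 0 then v ⟨(j : ℕ) - 1, by have := j.isLt; omega⟩
        else 0) ?_
      · rw [h]; simp
      · intro i j hji
        have hij : ¬ i = j := by exact fun h => absurd h (by exact Fin.ne_of_gt hji)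
        have : ¬ ((i : ℕ) = 0 ∧ (j : ℕ) ≠ 0) := by
          rintro ⟨hi, -⟩
          have : (j : ℕ) < (i : ℕ) := hji
          omega
        simp [hij, this]⟩

/-- The block matrix `(I_d  A ; 0  I_{n-d})` as an element of `SL_n(ℝ)`. -/
def gA (n d : ℕ) (A : Matrix (Fin d) (Fin (n - d)) ℝ) : SLn n :=
  ⟨Matrix.of fun i j =>
      if i = j then 1
      else if hij : (i : ℕ) < d ∧ d ≤ (j : ℕ) then
        A ⟨i, hij.1⟩ ⟨(j : ℕ) - d, by have := j.isLt; omega⟩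
      else 0,
    by
      have h := Matrix.det_of_upperTriangular (M := Matrix.of fun i j : Fin n =>
        if i = j then (1:ℝ)
        else if hij : (i : ℕ) < d ∧ d ≤ (j : ℕ) then
          A ⟨i, hij.1⟩ ⟨(j : ℕ) - d, by have := j.isLt; omega⟩
        else 0) ?_
      · rw [h]; simp
      · intro i j hji
        have hij : ¬ i = j := Fin.ne_of_gt hji
        have hlt : (j : ℕ) < (i : ℕ) := hji
        have : ¬ ((i : ℕ) < d ∧ d ≤ (j : ℕ)) := by omega
        simp [hij, this]⟩

/-- The flow `b_t = diag(e^{((n-d)/d)t} I_d, e^{-t} I_{n-d})`. -/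
def btFlow (n d : ℕ) (hd : 0 < d) (hdn : d ≤ n) (t : ℝ) : SLn n :=
  ⟨Matrix.diagonal (fun i =>
      if (i : ℕ) < d then Real.exp (((n : ℝ) - d) / d * t) else Real.exp (-t)),
    by
      rw [Matrix.det_diagonal]
      have key : ∀ i : Fin n,
          (if (i : ℕ) < d then Real.exp (((n : ℝ) - d) / d * t) else Real.exp (-t))
            = Real.exp (if (i : ℕ) < d then ((n : ℝ) - d) / d * t else -t) := by
        intro i; split <;> rfl
      rw [Finset.prod_congr rfl (fun i _ => key i), ← Real.exp_sum]
      have hsum : (∑ i : Fin n, if (i : ℕ) < d then ((n : ℝ) - d) / d * t else -t) = 0 := by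
        rw [Fin.sum_univ_eq_sum_range (fun i => if i < d then ((n : ℝ) - d) / d * t else -t) n]
        rw [Finset.range_eq_Ico, ← Finset.sum_Ico_consecutive _ (Nat.zero_le d) hdn]
        rw [Finset.sum_congr rfl (fun i hi => if_pos (Finset.mem_Ico.mp hi).2),
          Finset.sum_congr rfl (g := fun _ => -t)
            (fun i hi => if_neg (by have := (Finset.mem_Ico.mp hi).1; omega))]
        simp only [Finset.sum_const, Nat.card_Ico, nsmul_eq_mul, Nat.sub_zero]
        have hd' : (d : ℝ) ≠ 0 := Nat.cast_ne_zero.mpr hd.ne'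
        have hnd : ((n - d : ℕ) : ℝ) = (n : ℝ) - d := by
          push_cast [Nat.cast_sub hdn]; ring
        rw [hnd]
        field_simp
        ring
      rw [hsum, Real.exp_zero]⟩

/-- The vector `(1, x) ∈ ℝ^d` obtained by prepending `1` to `x ∈ ℝ^{d-1}`. -/
def tildeVec (d : ℕ) (x : Fin (d - 1) → ℝ) : Fin d → ℝ :=
  fun i => if h : (i : ℕ) = 0 then 1 else x ⟨(i : ℕ) - 1, by have := i.isLt; omega⟩

/-- The affine subspace `L_A = {(x, (1,x)A) : x ∈ ℝ^{d-1}}` of `ℝ^{n-1}`. -/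
def LAset (n d : ℕ) (hd : 2 ≤ d) (hdn : d ≤ n - 1) (A : Matrix (Fin d) (Fin (n - d)) ℝ) :
    Set (Fin (n - 1) → ℝ) :=
  {y | ∃ x : Fin (d - 1) → ℝ, y = fun j : Fin (n - 1) =>
    if h : (j : ℕ) < d - 1 then x ⟨(j : ℕ), h⟩
    else ∑ i : Fin d, tildeVec d x i * A i ⟨(j : ℕ) - (d - 1), by have := j.isLt; omega⟩}

/-- `A ∈ W_r(ι, κ)`: there is `C > 0` such that `‖Aq + p‖ ≤ C‖q‖^{-r}` has
infinitely many integer solutions. -/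
def MemW (r : ℝ) {ι κ : Type*} [Fintype ι] [Fintype κ] (A : Matrix ι κ ℝ) : Prop :=
  ∃ C : ℝ, 0 < C ∧ {pq : (ι → ℤ) × (κ → ℤ) |
    ‖A.mulVec (fun j => ((pq.2 j : ℝ))) + (fun i => ((pq.1 i : ℝ)))‖
      ≤ C * ‖(fun j => ((pq.2 j : ℝ)) : κ → ℝ)‖ ^ (-r)}.Infinite

/-- `A ∈ W'_r(ι, κ)`: for every `C > 0` the inequality `‖Aq + p‖ ≤ C‖q‖^{-r}` has
a nonzero integer solution. -/
def MemW' (r : ℝ) {ι κ : Type*} [Fintype ι] [Fintype κ] (A : Matrix ι κ ℝ) : Prop :=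
  ∀ C : ℝ, 0 < C → ∃ pq : (ι → ℤ) × (κ → ℤ), pq ≠ 0 ∧
    ‖A.mulVec (fun j => ((pq.2 j : ℝ))) + (fun i => ((pq.1 i : ℝ)))‖
      ≤ C * ‖(fun j => ((pq.2 j : ℝ)) : κ → ℝ)‖ ^ (-r)

/-- `Γ = SL_n(ℤ)` as a subgroup of `SL_n(ℝ)`. -/
def Gamma (n : ℕ) : Subgroup (SLn n) :=
  (Matrix.SpecialLinearGroup.map (n := Fin n) (Int.castRingHom ℝ)).range

/-- The homogeneous space `X = SL_n(ℝ)/SL_n(ℤ)`. -/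
abbrev XSpace (n : ℕ) := SLn n ⧸ Gamma n

instance (n : ℕ) : MeasurableSpace (XSpace n) := borel _

/-- The column indices `1 ≤ i < j ≤ n-2` of the matrix `A^ext`. -/
abbrev PairIdx (n : ℕ) := {p : Fin (n - 2) × Fin (n - 2) // p.1 < p.2}

/-- The matrix `A^ext` associated to a `2 × (n-2)` matrix `A`. -/
def Aext (n : ℕ) (A : Matrix (Fin 2) (Fin (n - 2)) ℝ) :
    Matrix (Fin (n - 2) ⊕ (Fin (n - 2) ⊕ Unit)) (PairIdx n) ℝ :=
  Matrix.of fun row col =>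
    match row with
    | Sum.inl k =>
        if k = col.1.1 then -(A 0 col.1.2) else if k = col.1.2 then A 0 col.1.1 else 0
    | Sum.inr (Sum.inl k) =>
        if k = col.1.1 then -(A 1 col.1.2) else if k = col.1.2 then A 1 col.1.1 else 0
    | Sum.inr (Sum.inr _) => A 0 col.1.2 * A 1 col.1.1 - A 0 col.1.1 * A 1 col.1.2

/-- Inclusion of `SL_n(ℤ)` into `SL_n(ℝ)`. -/
def SLmapZ (n : ℕ) : Matrix.SpecialLinearGroup (Fin n) ℤ →* SLn n :=
  Matrix.SpecialLinearGroup.map (Int.castRingHom ℝ)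

/-- Index of the standard basis of `⋀^k ℝ^N`: subsets of `Fin N` of cardinality `k`. -/
abbrev WIdx (N k : ℕ) := {s : Finset (Fin N) // s.card = k}

/-- Identification of `ι → ℝ` with the Euclidean space indexed by `ι`. -/
def toEuc {ι : Type*} [Fintype ι] (f : ι → ℝ) : EuclideanSpace ℝ ι :=
  (WithLp.equiv 2 (ι → ℝ)).symm f

/-- The Plücker coordinates of the wedge `w₁ ∧ ⋯ ∧ w_k` of vectors in `ℝ^N`. -/
def wedgeCoords (N k : ℕ) (w : Fin k → (Fin N → ℝ)) : WIdx N k → ℝ :=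
  fun S => (Matrix.of fun a b : Fin k => w a ((S.1.orderIsoOfFin S.2 b : Fin N))).det

/-- The wedge `w₁ ∧ ⋯ ∧ w_k` as an element of the Euclidean space `⋀^k ℝ^N`. -/
def wedgeE (N k : ℕ) (w : Fin k → (Fin N → ℝ)) : EuclideanSpace ℝ (WIdx N k) :=
  toEuc (wedgeCoords N k w)

/-- The `k`-th compound matrix, giving the action of a matrix on `⋀^k ℝ^N`
in Plücker coordinates. -/
def compound (N k : ℕ) (M : Matrix (Fin N) (Fin N) ℝ) : Matrix (WIdx N k) (WIdx N k) ℝ :=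
  Matrix.of fun S T =>
    (Matrix.of fun a b : Fin k =>
      M ((S.1.orderIsoOfFin S.2 a : Fin N)) ((T.1.orderIsoOfFin T.2 b : Fin N))).det

/-- Action of `g ∈ SL_n(ℝ)` on `⋀^k ℝ^N` in Plücker coordinates. -/
def wedgeAction (N k : ℕ) (M : Matrix (Fin N) (Fin N) ℝ) (w : EuclideanSpace ℝ (WIdx N k)) :
    EuclideanSpace ℝ (WIdx N k) :=
  toEuc ((compound N k M).mulVec (WithLp.equiv 2 _ w))

/-- The parabolic subgroup `P_j ⊆ SL_n(ℝ)` (block lower triangular with an upper-left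
`j × j` block), as a set. -/
def Pblock (n j : ℕ) : Set (SLn n) :=
  {g | ∀ s t : Fin n, (s : ℕ) < j → j ≤ (t : ℕ) → (g : Matrix (Fin n) (Fin n) ℝ) s t = 0}

/-- A vector `y ∈ ℝ^{n-1}` is Dirichlet-improvable. -/
def DirichletImprovable (n : ℕ) (y : Fin (n - 1) → ℝ) : Prop :=
  ∃ δ : ℝ, 0 < δ ∧ δ < 1 ∧ ∃ T₀ : ℝ, ∀ T : ℝ, T₀ ≤ T →
    ∃ (p : Fin (n - 1) → ℤ) (q : ℤ), q ≠ 0 ∧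
      ‖(fun i => (q : ℝ) * y i + (p i : ℝ) : Fin (n - 1) → ℝ)‖ ≤ δ / T ∧
      |(q : ℝ)| ≤ T ^ (n - 1)

/-- Flattening of an `n × n` matrix into a vector in `ℝ^{n·n}`. -/
def flatten (n : ℕ) (M : Matrix (Fin n) (Fin n) ℝ) : Fin (n * n) → ℝ :=
  fun idx => M (finProdFinEquiv.symm idx).1 (finProdFinEquiv.symm idx).2

/-- The adjoint action `Ad(g) : x ↦ g x g⁻¹` of `g ∈ SL_n(ℝ)` written as an
`(n·n) × (n·n)` matrix in the flattened coordinates. -/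
def AdMatrix (n : ℕ) (g : SLn n) : Matrix (Fin (n * n)) (Fin (n * n)) ℝ :=
  Matrix.of fun r c =>
    (g : Matrix (Fin n) (Fin n) ℝ) (finProdFinEquiv.symm r).1 (finProdFinEquiv.symm c).1 *
    ((g⁻¹ : SLn n) : Matrix (Fin n) (Fin n) ℝ) (finProdFinEquiv.symm c).2 (finProdFinEquiv.symm r).2

section Aux

open Real

lemma sum_split (n d : ℕ) (hdn : d ≤ n) (f : Fin n → ℝ) :
    ∑ j : Fin n, f j
      = ∑ i : Fin d, f ⟨i, by omega⟩ + ∑ j : Fin (n-d), f ⟨d + j, by omega⟩ := by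
  have h : d + (n - d) = n := by omega
  rw [← Fintype.sum_equiv (finSumFinEquiv.trans (finCongr h))
      (fun s => f ((finSumFinEquiv.trans (finCongr h)) s)) f (fun s => rfl),
    Fintype.sum_sum_type]
  congr 1

lemma gA_mulVec (n d : ℕ) (hdn : d ≤ n) (A : Matrix (Fin d) (Fin (n-d)) ℝ)
    (v : Fin n → ℝ) (k : Fin n) :
    ((gA n d A : Matrix (Fin n) (Fin n) ℝ).mulVec v) k
      = if h : (k : ℕ) < d then
          v k + ∑ j : Fin (n-d), A ⟨k, h⟩ j * v ⟨d + (j:ℕ), by omega⟩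
        else v k := by
  have hmv : ((gA n d A : Matrix (Fin n) (Fin n) ℝ).mulVec v) k
      = ∑ j : Fin n, (gA n d A : Matrix (Fin n) (Fin n) ℝ) k j * v j := rfl
  rw [hmv, sum_split n d hdn]
  by_cases hk : (k : ℕ) < d
  · rw [dif_pos hk]
    have h1 : ∑ i : Fin d, (gA n d A : Matrix (Fin n) (Fin n) ℝ) k ⟨i, by omega⟩ * v ⟨i, by omega⟩
        = v k := by
      rw [Finset.sum_eq_single (⟨(k:ℕ), hk⟩ : Fin d)]
      · have hkk : (⟨((⟨(k:ℕ), hk⟩ : Fin d) : ℕ), by omega⟩ : Fin n) = k := Fin.ext rfl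
        rw [hkk]
        simp [gA]
      · intro i _ hi
        have hne : ¬ (k = (⟨(i:ℕ), by omega⟩ : Fin n)) := by
          intro hc
          apply hi; apply Fin.ext
          have := congrArg Fin.val hc; simpa using this.symm
        have hnc : ¬ ((k:ℕ) < d ∧ d ≤ ((⟨(i:ℕ), by omega⟩ : Fin n) : ℕ)) := by
          simp
        simp only [gA, Matrix.of_apply]
        rw [if_neg hne, dif_neg hnc, zero_mul]
      · intro h; exact absurd (Finset.mem_univ _) h
    have h2 : ∑ j : Fin (n-d), (gA n d A : Matrix (Fin n) (Fin n) ℝ) k ⟨d + (j:ℕ), by omega⟩ * v ⟨d + (j:ℕ), by omega⟩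
        = ∑ j : Fin (n-d), A ⟨k, hk⟩ j * v ⟨d + (j:ℕ), by omega⟩ := by
      apply Finset.sum_congr rfl; intro j _
      have hne : ¬ (k = (⟨d + (j:ℕ), by omega⟩ : Fin n)) := by
        intro hc; have := congrArg Fin.val hc; simp at this; omega
      have hcond : (k:ℕ) < d ∧ d ≤ ((⟨d + (j:ℕ), by omega⟩ : Fin n) : ℕ) := by
        refine ⟨hk, ?_⟩; simp
      congr 1
      simp only [gA, Matrix.of_apply]
      rw [if_neg hne, dif_pos hcond]
      congr 1
      apply Fin.ext; simp
    rw [h1, h2]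
  · rw [dif_neg hk]
    have h1 : ∑ i : Fin d, (gA n d A : Matrix (Fin n) (Fin n) ℝ) k ⟨i, by omega⟩ * v ⟨i, by omega⟩
        = 0 := by
      apply Finset.sum_eq_zero; intro i _
      have hne : ¬ (k = (⟨(i:ℕ), by omega⟩ : Fin n)) := by
        intro hc; have := congrArg Fin.val hc; simp at this; omega
      have hnc : ¬ ((k:ℕ) < d ∧ d ≤ ((⟨(i:ℕ), by omega⟩ : Fin n) : ℕ)) := by
        intro hc; exact hk hc.1
      simp only [gA, Matrix.of_apply]
      rw [if_neg hne, dif_neg hnc, zero_mul]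
    have h2 : ∑ j : Fin (n-d), (gA n d A : Matrix (Fin n) (Fin n) ℝ) k ⟨d + (j:ℕ), by omega⟩ * v ⟨d + (j:ℕ), by omega⟩
        = v k := by
      rw [Finset.sum_eq_single (⟨(k:ℕ) - d, by omega⟩ : Fin (n-d))]
      · have hkk : (⟨d + ((⟨(k:ℕ) - d, by omega⟩ : Fin (n-d)):ℕ), by omega⟩ : Fin n) = k := by
          apply Fin.ext; simp; omega
        rw [hkk]
        simp [gA]
      · intro j _ hj
        have hne : ¬ (k = (⟨d + (j:ℕ), by omega⟩ : Fin n)) := by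
          intro hc; apply hj; apply Fin.ext
          have := congrArg Fin.val hc; simp at this ⊢; omega
        have hnc : ¬ ((k:ℕ) < d ∧ d ≤ ((⟨d + (j:ℕ), by omega⟩ : Fin n) : ℕ)) := by
          intro hc; exact hk hc.1
        simp only [gA, Matrix.of_apply]
        rw [if_neg hne, dif_neg hnc, zero_mul]
      · intro h; exact absurd (Finset.mem_univ _) h
    rw [h1, h2, zero_add]

end Aux
section Aux2
open Real

lemma btFlow_coe (n d : ℕ) (h1 : 0 < d) (h2 : d ≤ n) (t : ℝ) :
    ((btFlow n d h1 h2 t : SLn n) : Matrix (Fin n) (Fin n) ℝ)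
      = Matrix.diagonal (fun i : Fin n =>
          if (i : ℕ) < d then Real.exp (((n : ℝ) - d) / d * t) else Real.exp (-t)) := rfl

lemma gtFlow_coe (n : ℕ) (h : 0 < n) (t : ℝ) :
    ((gtFlow n h t : SLn n) : Matrix (Fin n) (Fin n) ℝ)
      = Matrix.diagonal (fun i : Fin n =>
          if (i : ℕ) = 0 then Real.exp (((n : ℝ) - 1) * t) else Real.exp (-t)) := rfl

lemma btgA_mulVec (n d : ℕ) (h1 : 0 < d) (h2 : d ≤ n) (A : Matrix (Fin d) (Fin (n-d)) ℝ)
    (t : ℝ) (v : Fin n → ℝ) (k : Fin n) :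
    (((btFlow n d h1 h2 ((d:ℝ)*t) * gA n d A : SLn n) : Matrix (Fin n) (Fin n) ℝ).mulVec v) k
      = if h : (k : ℕ) < d then
          Real.exp (((n:ℝ)-d)*t) *
            (v k + ∑ j : Fin (n-d), A ⟨k, h⟩ j * v ⟨d + (j:ℕ), by omega⟩)
        else Real.exp (-((d:ℝ)*t)) * v k := by
  rw [Matrix.SpecialLinearGroup.coe_mul, ← Matrix.mulVec_mulVec, btFlow_coe,
    Matrix.mulVec_diagonal, gA_mulVec n d h2]
  have hd0 : (d : ℝ) ≠ 0 := Nat.cast_ne_zero.mpr h1.ne'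
  by_cases hk : (k : ℕ) < d
  · rw [dif_pos hk, dif_pos hk, if_pos hk]
    congr 2
    field_simp
  · rw [dif_neg hk, dif_neg hk, if_neg hk]

lemma gt_mulVec (n : ℕ) (h : 0 < n) (t : ℝ) (z : Fin n → ℝ) (k : Fin n) :
    (((gtFlow n h t : SLn n) : Matrix (Fin n) (Fin n) ℝ).mulVec z) k
      = (if (k : ℕ) = 0 then Real.exp (((n:ℝ)-1)*t) else Real.exp (-t)) * z k := by
  rw [gtFlow_coe, Matrix.mulVec_diagonal]

lemma le_of_expmul {a b c B : ℝ} (h : Real.exp a * c ≤ B * Real.exp b) :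
    c ≤ B * Real.exp (b - a) := by
  have h2 := mul_le_mul_of_nonneg_left h (Real.exp_pos (-a)).le
  calc c = Real.exp (-a) * (Real.exp a * c) := by
        rw [← mul_assoc, ← Real.exp_add]; simp
    _ ≤ Real.exp (-a) * (B * Real.exp b) := h2
    _ = B * Real.exp (b - a) := by rw [mul_comm (Real.exp (-a)), mul_assoc, ← Real.exp_add]; ring_nf

lemma expmul_of_le {a b c B : ℝ} (h : c ≤ B * Real.exp b) :
    Real.exp a * c ≤ B * Real.exp (b + a) := by
  have h2 := mul_le_mul_of_nonneg_left h (Real.exp_pos a).le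
  calc Real.exp a * c ≤ Real.exp a * (B * Real.exp b) := h2
    _ = B * Real.exp (b + a) := by rw [Real.exp_add]; ring

lemma intvec_one_le_norm {m : ℕ} (v : Fin m → ℤ) (hv : v ≠ 0) :
    1 ≤ ‖(fun i => (v i : ℝ) : Fin m → ℝ)‖ := by
  obtain ⟨i, hi⟩ := Function.ne_iff.mp hv
  have h1 : (1:ℝ) ≤ |(v i : ℝ)| := by
    have := Int.one_le_abs (by simpa using hi)
    exact_mod_cast this
  calc (1:ℝ) ≤ |(v i : ℝ)| := h1
    _ ≤ _ := by
      simpa [Real.norm_eq_abs] using norm_le_pi_norm (fun i => (v i : ℝ) : Fin m → ℝ) i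

lemma intvec_cast_ne {m : ℕ} (v : Fin m → ℤ) (hv : v ≠ 0) :
    (fun i => (v i : ℝ) : Fin m → ℝ) ≠ 0 := by
  obtain ⟨i, hi⟩ := Function.ne_iff.mp hv
  intro hc
  apply hi
  have := congrFun hc i
  simpa using this

lemma sl_mulVec_ne (n : ℕ) (g : SLn n) (x : Fin n → ℝ) (hx : x ≠ 0) :
    (g : Matrix (Fin n) (Fin n) ℝ).mulVec x ≠ 0 := by
  intro hc
  apply hx
  have : ((g⁻¹ : SLn n) : Matrix (Fin n) (Fin n) ℝ).mulVec
      ((g : Matrix (Fin n) (Fin n) ℝ).mulVec x) = x := by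
    rw [Matrix.mulVec_mulVec, ← Matrix.SpecialLinearGroup.coe_mul, inv_mul_cancel,
      Matrix.SpecialLinearGroup.coe_one, Matrix.one_mulVec]
  rw [hc, Matrix.mulVec_zero] at this
  exact this.symm

end Aux2
section Aux3
open Real

lemma sl_coe_continuous (n : ℕ) :
    Continuous (fun g : SLn n => (g : Matrix (Fin n) (Fin n) ℝ)) :=
  continuous_induced_dom

lemma entry_bound (n : ℕ) (Ω : Set (SLn n)) (hc : IsCompact Ω) (hne : Ω.Nonempty) :
    ∃ K : ℝ, 0 ≤ K ∧ ∀ ω ∈ Ω, ∀ s t : Fin n, |(ω : Matrix (Fin n) (Fin n) ℝ) s t| ≤ K := by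
  set F : SLn n → ℝ := fun ω => ∑ s : Fin n, ∑ t : Fin n, |(ω : Matrix (Fin n) (Fin n) ℝ) s t|
    with hF
  have hFc : Continuous F := by
    apply continuous_finset_sum
    intro s _
    apply continuous_finset_sum
    intro t _
    exact (((continuous_apply t).comp (continuous_apply s)).comp (sl_coe_continuous n)).abs
  obtain ⟨z, hz, hmax⟩ := hc.exists_isMaxOn hne hFc.continuousOn
  refine ⟨F z, ?_, ?_⟩
  · exact Finset.sum_nonneg fun s _ => Finset.sum_nonneg fun t _ => abs_nonneg _
  · intro ω hω s t
    have h1 : |(ω : Matrix (Fin n) (Fin n) ℝ) s t|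
        ≤ ∑ t' : Fin n, |(ω : Matrix (Fin n) (Fin n) ℝ) s t'| :=
      Finset.single_le_sum (f := fun t' => |(ω : Matrix (Fin n) (Fin n) ℝ) s t'|)
        (fun _ _ => abs_nonneg _) (Finset.mem_univ t)
    have h2 : ∑ t' : Fin n, |(ω : Matrix (Fin n) (Fin n) ℝ) s t'| ≤ F ω :=
      Finset.single_le_sum
        (f := fun s' => ∑ t' : Fin n, |(ω : Matrix (Fin n) (Fin n) ℝ) s' t'|)
        (fun _ _ => Finset.sum_nonneg fun _ _ => abs_nonneg _) (Finset.mem_univ s)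
    exact le_trans (le_trans h1 h2) (hmax hω)

lemma le_biSup_cont (n : ℕ) (Ω : Set (SLn n)) (hc : IsCompact Ω)
    (f : SLn n → ℝ) (hf : Continuous f) {a : SLn n} (ha : a ∈ Ω) :
    f a ≤ ⨆ ω ∈ Ω, f ω := by
  obtain ⟨b, hb⟩ := (hc.image hf).bddAbove
  simp only [upperBounds, Set.mem_image, Set.mem_setOf_eq] at hb
  have hbd : ∀ ω ∈ Ω, f ω ≤ b := fun ω hω => hb ⟨ω, hω, rfl⟩
  have hrange : ∀ ω : SLn n, (⨆ _ : ω ∈ Ω, f ω) ≤ max b 0 := by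
    intro ω
    by_cases hω : ω ∈ Ω
    · rw [ciSup_pos hω]; exact le_max_of_le_left (hbd ω hω)
    · haveI : IsEmpty (ω ∈ Ω) := ⟨hω⟩
      rw [Real.iSup_of_isEmpty]; exact le_max_right _ _
  have hBdd : BddAbove (Set.range fun ω : SLn n => ⨆ _ : ω ∈ Ω, f ω) := by
    refine ⟨max b 0, ?_⟩
    rintro x ⟨ω, rfl⟩; exact hrange ω
  have h0 : (⨆ _ : a ∈ Ω, f a) = f a := ciSup_pos ha
  calc f a = ⨆ _ : a ∈ Ω, f a := h0.symm
    _ ≤ ⨆ ω ∈ Ω, f ω := le_ciSup hBdd a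

lemma span_bound (d : ℕ) (S : Set (Fin d → ℝ)) (hS : Submodule.span ℝ S = ⊤) :
    ∃ (s : Finset (Fin d → ℝ)) (M : ℝ), (↑s ⊆ S) ∧ 0 < M ∧
      ∀ x : Fin d → ℝ, ‖x‖ ≤ M * ‖(fun w : ↥s => ((w : Fin d → ℝ) ⬝ᵥ x) : ↥s → ℝ)‖ := by
  obtain ⟨t, hts, hspan, hli⟩ := exists_linearIndependent ℝ S
  have htfin : t.Finite := hli.setFinite
  rw [hS] at hspan
  set s : Finset (Fin d → ℝ) := htfin.toFinset with hs
  have hcoe : (↑s : Set (Fin d → ℝ)) = t := htfin.coe_toFinset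
  have hmem : ∀ w : ↥s, (w : Fin d → ℝ) ∈ t := by
    intro w; have := w.2; rwa [← hcoe]
  -- the linear map x ↦ (w ⬝ᵥ x)_{w ∈ s}
  set Φ : (Fin d → ℝ) →ₗ[ℝ] (↥s → ℝ) :=
    { toFun := fun x => fun w => (w : Fin d → ℝ) ⬝ᵥ x
      map_add' := by intro x y; funext w; simp [dotProduct_add]
      map_smul' := by intro c x; funext w; simp [dotProduct_smul] } with hΦ
  have hinj : Function.Injective Φ := by
    rw [← LinearMap.ker_eq_bot, Submodule.eq_bot_iff]
    intro x hx
    have hx' : ∀ w : ↥s, (w : Fin d → ℝ) ⬝ᵥ x = 0 := fun w => congrFun hx w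
    set ψ : (Fin d → ℝ) →ₗ[ℝ] ℝ :=
      { toFun := fun w => w ⬝ᵥ x
        map_add' := by intro a b; simp [add_dotProduct]
        map_smul' := by intro c a; simp [smul_dotProduct] } with hψ
    have hker : Submodule.span ℝ t ≤ LinearMap.ker ψ := by
      rw [Submodule.span_le]
      intro w hw
      have : (⟨w, by rwa [← hcoe] at hw⟩ : ↥s) = ⟨w, _⟩ := rfl
      exact hx' ⟨w, by rwa [← hcoe] at hw⟩
    rw [hspan, top_le_iff] at hker
    have : ψ x = 0 := by rw [← LinearMap.mem_ker, hker]; trivial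
    have hxx : x ⬝ᵥ x = 0 := this
    exact dotProduct_self_eq_zero.mp hxx
  set e := LinearEquiv.ofInjective Φ hinj
  set g : ↥(LinearMap.range Φ) →ₗ[ℝ] (Fin d → ℝ) := e.symm.toLinearMap
  have hgc : Continuous g := LinearMap.continuous_of_finiteDimensional g
  set G : ↥(LinearMap.range Φ) →L[ℝ] (Fin d → ℝ) := ⟨g, hgc⟩
  refine ⟨s, ‖G‖ + 1, by rw [hcoe]; exact hts, by positivity, ?_⟩
  intro x
  have hx : x = G ⟨Φ x, LinearMap.mem_range_self Φ x⟩ := by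
    have : (⟨Φ x, LinearMap.mem_range_self Φ x⟩ : ↥(LinearMap.range Φ)) = e x := rfl
    rw [this]
    exact (e.symm_apply_apply x).symm
  calc ‖x‖ = ‖G ⟨Φ x, LinearMap.mem_range_self Φ x⟩‖ := by rw [← hx]
    _ ≤ ‖G‖ * ‖(⟨Φ x, LinearMap.mem_range_self Φ x⟩ : ↥(LinearMap.range Φ))‖ := G.le_opNorm _
    _ = ‖G‖ * ‖Φ x‖ := by rw [Submodule.coe_norm]
    _ ≤ (‖G‖ + 1) * ‖Φ x‖ := by
        have : (0:ℝ) ≤ ‖Φ x‖ := norm_nonneg _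
        nlinarith [norm_nonneg G]
    _ = (‖G‖ + 1) * ‖(fun w : ↥s => ((w : Fin d → ℝ) ⬝ᵥ x) : ↥s → ℝ)‖ := rfl

end Aux3
section Aux4
open Real

/-- First block `p + Aq` of `g_A v`. -/
def Xpart (n d : ℕ) (hdn : d ≤ n) (A : Matrix (Fin d) (Fin (n-d)) ℝ) (v : Fin n → ℝ) :
    Fin d → ℝ :=
  fun i => v ⟨(i:ℕ), lt_of_lt_of_le i.isLt hdn⟩
    + ∑ j : Fin (n-d), A i j * v ⟨d + (j:ℕ), by have := j.isLt; omega⟩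

/-- Second block `q` of `g_A v`. -/
def Qpart (n d : ℕ) (v : Fin n → ℝ) : Fin (n-d) → ℝ :=
  fun j => v ⟨d + (j:ℕ), by have := j.isLt; omega⟩

def glue (n d : ℕ) (p : Fin d → ℤ) (q : Fin (n-d) → ℤ) : Fin n → ℤ :=
  fun k => if h : (k:ℕ) < d then p ⟨(k:ℕ), h⟩
    else if h2 : (k:ℕ) - d < n - d then q ⟨(k:ℕ) - d, h2⟩ else 0

lemma glue_ne_zero (n d : ℕ) (hdn : d ≤ n) (p : Fin d → ℤ) (q : Fin (n-d) → ℤ)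
    (h : (p, q) ≠ 0) : glue n d p q ≠ 0 := by
  intro hc
  apply h
  have hp : p = 0 := by
    funext i
    have := congrFun hc ⟨(i:ℕ), lt_of_lt_of_le i.isLt hdn⟩
    simp only [glue] at this
    rw [dif_pos i.isLt] at this
    simpa using this
  have hq : q = 0 := by
    funext j
    have := congrFun hc ⟨d + (j:ℕ), by have := j.isLt; omega⟩
    simp only [glue] at this
    rw [dif_neg (by omega), dif_pos (by have := j.isLt; omega)] at this
    have hj : (⟨d + (j:ℕ) - d, by have := j.isLt; omega⟩ : Fin (n-d)) = j := Fin.ext (by simp)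
    rw [hj] at this
    simpa using this
  rw [hp, hq]; rfl

lemma qpart_glue (n d : ℕ) (p : Fin d → ℤ) (q : Fin (n-d) → ℤ) (j : Fin (n-d)) :
    Qpart n d (fun k => ((glue n d p q k : ℝ))) j = (q j : ℝ) := by
  simp only [Qpart, glue]
  rw [dif_neg (by omega), dif_pos (by have := j.isLt; omega)]
  have hj : (⟨d + (j:ℕ) - d, by have := j.isLt; omega⟩ : Fin (n-d)) = j := Fin.ext (by simp)
  rw [hj]

lemma xpart_glue (n d : ℕ) (hdn : d ≤ n) (A : Matrix (Fin d) (Fin (n-d)) ℝ)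
    (p : Fin d → ℤ) (q : Fin (n-d) → ℤ) (i : Fin d) :
    Xpart n d hdn A (fun k => ((glue n d p q k : ℝ))) i
      = (A.mulVec (fun j => ((q j : ℝ))) + fun i' => ((p i' : ℝ))) i := by
  have h1 : ((glue n d p q ⟨(i:ℕ), lt_of_lt_of_le i.isLt hdn⟩ : ℤ) : ℝ) = (p i : ℝ) := by
    simp only [glue]
    rw [dif_pos i.isLt]
  have h2 : ∀ j : Fin (n-d),
      ((glue n d p q ⟨d + (j:ℕ), by have := j.isLt; omega⟩ : ℤ) : ℝ) = (q j : ℝ) := by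
    intro j
    simp only [glue]
    rw [dif_neg (by omega), dif_pos (by have := j.isLt; omega)]
    have hj : (⟨d + (j:ℕ) - d, by have := j.isLt; omega⟩ : Fin (n-d)) = j := Fin.ext (by simp)
    rw [hj]
  simp only [Xpart, h1]
  rw [Finset.sum_congr rfl (fun j _ => by rw [h2 j])]
  simp only [Pi.add_apply, Matrix.mulVec, dotProduct]
  ring

end Aux4
section Aux5
open Real

def pOf (n d : ℕ) (hdn : d ≤ n) (v : Fin n → ℤ) : Fin d → ℤ :=
  fun i => v ⟨(i:ℕ), lt_of_lt_of_le i.isLt hdn⟩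

def qOf (n d : ℕ) (v : Fin n → ℤ) : Fin (n-d) → ℤ :=
  fun j => v ⟨d + (j:ℕ), by have := j.isLt; omega⟩

lemma xpart_cast (n d : ℕ) (hdn : d ≤ n) (A : Matrix (Fin d) (Fin (n-d)) ℝ)
    (v : Fin n → ℤ) (i : Fin d) :
    Xpart n d hdn A (fun k => ((v k : ℝ))) i
      = (A.mulVec (fun j => ((qOf n d v j : ℝ))) + fun i' => ((pOf n d hdn v i' : ℝ))) i := by
  simp only [Xpart, pOf, qOf, Pi.add_apply, Matrix.mulVec, dotProduct]
  ring

lemma qpart_cast (n d : ℕ) (v : Fin n → ℤ) (j : Fin (n-d)) :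
    Qpart n d (fun k => ((v k : ℝ))) j = ((qOf n d v j : ℝ)) := rfl

lemma pq_of_ne (n d : ℕ) (hdn : d ≤ n) (v : Fin n → ℤ) (hv : v ≠ 0) :
    (pOf n d hdn v, qOf n d v) ≠ (0 : (Fin d → ℤ) × (Fin (n-d) → ℤ)) := by
  obtain ⟨k, hk⟩ := Function.ne_iff.mp hv
  intro hc
  have hp : pOf n d hdn v = 0 := congrArg Prod.fst hc
  have hq : qOf n d v = 0 := congrArg Prod.snd hc
  by_cases h : (k:ℕ) < d
  · have := congrFun hp ⟨(k:ℕ), h⟩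
    simp only [pOf, Pi.zero_apply] at this
    exact hk (by simpa using this)
  · have hk2 : (k:ℕ) - d < n - d := by have := k.isLt; omega
    have := congrFun hq ⟨(k:ℕ) - d, hk2⟩
    simp only [qOf, Pi.zero_apply] at this
    have he : (⟨d + ((k:ℕ) - d), by omega⟩ : Fin n) = k := Fin.ext (by simp; omega)
    rw [he] at this
    exact hk this

lemma btgA_apply_lt (n d : ℕ) (h1 : 0 < d) (h2 : d ≤ n) (A : Matrix (Fin d) (Fin (n-d)) ℝ)
    (t : ℝ) (v : Fin n → ℝ) (k : Fin n) (h : (k:ℕ) < d) :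
    (((btFlow n d h1 h2 ((d:ℝ)*t) * gA n d A : SLn n) : Matrix (Fin n) (Fin n) ℝ).mulVec v) k
      = Real.exp (((n:ℝ)-d)*t) * Xpart n d h2 A v ⟨(k:ℕ), h⟩ := by
  rw [btgA_mulVec n d h1 h2 A t v k, dif_pos h]
  rfl

lemma btgA_apply_ge (n d : ℕ) (h1 : 0 < d) (h2 : d ≤ n) (A : Matrix (Fin d) (Fin (n-d)) ℝ)
    (t : ℝ) (v : Fin n → ℝ) (k : Fin n) (h : ¬ (k:ℕ) < d) (hk2 : (k:ℕ) - d < n - d) :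
    (((btFlow n d h1 h2 ((d:ℝ)*t) * gA n d A : SLn n) : Matrix (Fin n) (Fin n) ℝ).mulVec v) k
      = Real.exp (-((d:ℝ)*t)) * Qpart n d v ⟨(k:ℕ) - d, hk2⟩ := by
  rw [btgA_mulVec n d h1 h2 A t v k, dif_neg h]
  have he : (⟨d + ((k:ℕ) - d), by have := k.isLt; omega⟩ : Fin n) = k := Fin.ext (by simp; omega)
  simp only [Qpart]
  rw [he]

lemma btgA_norm_le_of (n d : ℕ) (h1 : 0 < d) (h2 : d ≤ n) (A : Matrix (Fin d) (Fin (n-d)) ℝ)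
    (t B : ℝ) (hB : 0 ≤ B) (v : Fin n → ℝ)
    (hx : ∀ i : Fin d, Real.exp (((n:ℝ)-d)*t) * |Xpart n d h2 A v i| ≤ B)
    (hq : ∀ j : Fin (n-d), Real.exp (-((d:ℝ)*t)) * |Qpart n d v j| ≤ B) :
    ‖(((btFlow n d h1 h2 ((d:ℝ)*t) * gA n d A : SLn n) : Matrix (Fin n) (Fin n) ℝ)).mulVec v‖
      ≤ B := by
  rw [pi_norm_le_iff_of_nonneg hB]
  intro k
  rw [Real.norm_eq_abs]
  by_cases h : (k:ℕ) < d
  · rw [btgA_apply_lt n d h1 h2 A t v k h, abs_mul, Real.abs_exp]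
    exact hx ⟨(k:ℕ), h⟩
  · have hk2 : (k:ℕ) - d < n - d := by have := k.isLt; omega
    rw [btgA_apply_ge n d h1 h2 A t v k h hk2, abs_mul, Real.abs_exp]
    exact hq _

lemma btgA_norm_extract (n d : ℕ) (h1 : 0 < d) (h2 : d ≤ n) (A : Matrix (Fin d) (Fin (n-d)) ℝ)
    (t B : ℝ) (v : Fin n → ℝ)
    (h : ‖(((btFlow n d h1 h2 ((d:ℝ)*t) * gA n d A : SLn n) : Matrix (Fin n) (Fin n) ℝ)).mulVec v‖
      ≤ B) :
    (∀ i : Fin d, Real.exp (((n:ℝ)-d)*t) * |Xpart n d h2 A v i| ≤ B)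
      ∧ (∀ j : Fin (n-d), Real.exp (-((d:ℝ)*t)) * |Qpart n d v j| ≤ B) := by
  constructor
  · intro i
    have hle := le_trans (norm_le_pi_norm _ ⟨(i:ℕ), lt_of_lt_of_le i.isLt h2⟩) h
    rw [Real.norm_eq_abs, btgA_apply_lt n d h1 h2 A t v _ i.isLt, abs_mul, Real.abs_exp] at hle
    exact hle
  · intro j
    have hk : ¬ ((⟨d + (j:ℕ), by have := j.isLt; omega⟩ : Fin n) : ℕ) < d := by simp
    have hk2 : ((⟨d + (j:ℕ), by have := j.isLt; omega⟩ : Fin n) : ℕ) - d < n - d := by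
      simpa using j.isLt
    have hle := le_trans (norm_le_pi_norm _ (⟨d + (j:ℕ), by have := j.isLt; omega⟩ : Fin n)) h
    rw [Real.norm_eq_abs, btgA_apply_ge n d h1 h2 A t v _ hk hk2, abs_mul, Real.abs_exp] at hle
    have he : (⟨((⟨d + (j:ℕ), by have := j.isLt; omega⟩ : Fin n) : ℕ) - d, hk2⟩ : Fin (n-d)) = j :=
      Fin.ext (by simp)
    rwa [he] at hle

lemma abs_sum_mul_le {m : ℕ} (c u : Fin m → ℝ) {K Bu : ℝ} (hK0 : 0 ≤ K)
    (hc : ∀ i, |c i| ≤ K) (hu : ∀ i, |u i| ≤ Bu) :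
    |∑ i, c i * u i| ≤ (m:ℝ) * (K * Bu) := by
  calc |∑ i, c i * u i| ≤ ∑ i, |c i * u i| := Finset.abs_sum_le_sum_abs _ _
    _ ≤ ∑ _i : Fin m, K * Bu := by
        refine Finset.sum_le_sum (fun i _ => ?_)
        rw [abs_mul]
        exact mul_le_mul (hc i) (hu i) (abs_nonneg _) hK0
    _ = (m:ℝ) * (K * Bu) := by
        rw [Finset.sum_const, Finset.card_univ, Fintype.card_fin, nsmul_eq_mul]

lemma row_mulVec_head (n d : ℕ) (hdn : d ≤ n) (Bm : Matrix (Fin n) (Fin n) ℝ) (k0 : Fin n)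
    (hrow : ∀ j : Fin n, d ≤ (j:ℕ) → Bm k0 j = 0) (u : Fin n → ℝ) :
    Bm.mulVec u k0
      = ∑ i : Fin d, Bm k0 ⟨(i:ℕ), lt_of_lt_of_le i.isLt hdn⟩
          * u ⟨(i:ℕ), lt_of_lt_of_le i.isLt hdn⟩ := by
  have h0 : Bm.mulVec u k0 = ∑ j : Fin n, Bm k0 j * u j := rfl
  rw [h0, sum_split n d hdn]
  have h2 : ∀ j : Fin (n-d),
      Bm k0 (⟨d + (j:ℕ), by have := j.isLt; omega⟩ : Fin n)
        * u (⟨d + (j:ℕ), by have := j.isLt; omega⟩ : Fin n) = 0 := by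
    intro j
    rw [hrow _ (by simp), zero_mul]
  rw [Finset.sum_congr rfl (fun j _ => h2 j)]
  simp

lemma matrix_entry_bound (n : ℕ) (B : Matrix (Fin n) (Fin n) ℝ) :
    ∃ K : ℝ, 0 ≤ K ∧ ∀ s t : Fin n, |B s t| ≤ K := by
  refine ⟨∑ s : Fin n, ∑ t : Fin n, |B s t|,
    Finset.sum_nonneg fun s _ => Finset.sum_nonneg fun t _ => abs_nonneg _, ?_⟩
  intro s t
  have h1 : |B s t| ≤ ∑ t' : Fin n, |B s t'| :=
    Finset.single_le_sum (f := fun t' => |B s t'|) (fun _ _ => abs_nonneg _) (Finset.mem_univ t)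
  have h2 : ∑ t' : Fin n, |B s t'| ≤ ∑ s' : Fin n, ∑ t' : Fin n, |B s' t'| :=
    Finset.single_le_sum (f := fun s' => ∑ t' : Fin n, |B s' t'|)
      (fun _ _ => Finset.sum_nonneg fun _ _ => abs_nonneg _) (Finset.mem_univ s)
  exact le_trans h1 h2

end Aux5
section Main
open Real

lemma aux_n_pos (n : ℕ) (hn : 3 ≤ n) : 0 < n := by omega

lemma aux_d_pos (d : ℕ) (hd : 2 ≤ d) : 0 < d := by omega

lemma aux_d_le (n d : ℕ) (hdn : d ≤ n - 1) : d ≤ n := by omega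

lemma dir12 (n d : ℕ) (hn : 3 ≤ n) (hd : 2 ≤ d) (hdn : d ≤ n - 1)
    (r : ℝ) (hr0 : 0 < r) (hrd : r < d)
    (A : Matrix (Fin d) (Fin (n - d)) ℝ)
    (hW : MemW' (((n : ℝ) - d + r) / (d - r)) A) :
    ∃ R : ℕ → ℝ, Tendsto R atTop (𝓝 0) ∧ ∃ t : ℕ → ℝ, Tendsto t atTop atTop ∧
      ∃ v : ℕ → (Fin n → ℤ), (∀ i, v i ≠ 0) ∧ ∀ i,
        ‖((btFlow n d (aux_d_pos d hd) (aux_d_le n d hdn) (d * t i) * gA n d A : SLn n) :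
            Matrix (Fin n) (Fin n) ℝ).mulVec (fun j => ((v i j : ℝ)))‖
          ≤ R i * Real.exp (-(r * t i)) := by
  set ρ : ℝ := ((n : ℝ) - d + r) / (d - r) with hρ
  have hnd1 : (d:ℝ) + 1 ≤ (n:ℝ) := by exact_mod_cast (by omega : d + 1 ≤ n)
  have hdr : (0:ℝ) < (d:ℝ) - r := by linarith
  have hρ0 : 0 < ρ := div_pos (by linarith) hdr
  have hkey : ρ * ((d:ℝ) - r) = (n:ℝ) - d + r := div_mul_cancel₀ _ hdr.ne'
  choose pq hne hb using fun i : ℕ => hW (Real.exp (-(i:ℝ)*(ρ+1))) (Real.exp_pos _)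
  have hqne : ∀ i, (pq i).2 ≠ 0 := by
    intro i hq0
    have hb' := hb i
    rw [hq0] at hb'
    have hcast : (fun j => (((0 : Fin (n-d) → ℤ) j : ℝ))) = (0 : Fin (n-d) → ℝ) := by
      funext j; simp
    rw [hcast, Matrix.mulVec_zero, norm_zero, Real.zero_rpow (by linarith), mul_zero,
      zero_add] at hb'
    have hp0 : (pq i).1 = 0 := by
      have := norm_le_zero_iff.mp hb'
      funext i'
      have := congrFun this i'
      simpa using this
    exact hne i (Prod.ext hp0 hq0)
  have hq1 : ∀ i, 1 ≤ ‖(fun j => (((pq i).2 j : ℝ)) : Fin (n-d) → ℝ)‖ :=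
    fun i => intvec_one_le_norm _ (hqne i)
  set t : ℕ → ℝ := fun i =>
    (Real.log ‖(fun j => (((pq i).2 j : ℝ)) : Fin (n-d) → ℝ)‖ + i) / ((d:ℝ) - r) with hts
  have hE : ∀ i, Real.exp (((d:ℝ)-r) * t i)
      = ‖(fun j => (((pq i).2 j : ℝ)) : Fin (n-d) → ℝ)‖ * Real.exp i := by
    intro i
    have hq0 : (0:ℝ) < ‖(fun j => (((pq i).2 j : ℝ)) : Fin (n-d) → ℝ)‖ := lt_of_lt_of_le one_pos (hq1 i)
    rw [hts]
    simp only
    rw [mul_comm, div_mul_cancel₀ _ hdr.ne', Real.exp_add, Real.exp_log hq0]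
  refine ⟨fun i => Real.exp (-(i:ℝ)), ?_, t, ?_, fun i => glue n d (pq i).1 (pq i).2,
    fun i => glue_ne_zero n d (aux_d_le n d hdn) _ _ (hne i), ?_⟩
  · exact Real.tendsto_exp_neg_atTop_nhds_zero.comp tendsto_natCast_atTop_atTop
  · have hbase : Tendsto (fun i : ℕ => (i:ℝ) / ((d:ℝ) - r)) atTop atTop :=
      tendsto_natCast_atTop_atTop.atTop_div_const hdr
    apply tendsto_atTop_mono ?_ hbase
    intro i
    rw [hts]
    simp only
    gcongr
    linarith [Real.log_nonneg (hq1 i)]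
  · intro i
    set cq : Fin (n-d) → ℝ := fun j => (((pq i).2 j : ℝ)) with hcq
    set cp : Fin d → ℝ := fun i' => (((pq i).1 i' : ℝ)) with hcp
    have hq0 : (0:ℝ) < ‖cq‖ := lt_of_lt_of_le one_pos (hq1 i)
    apply btgA_norm_le_of n d (aux_d_pos d hd) (aux_d_le n d hdn) A (t i) _ (by positivity)
    · -- x part
      intro ii
      have hXle : |Xpart n d (aux_d_le n d hdn) A (fun k => ((glue n d (pq i).1 (pq i).2 k : ℝ))) ii|
          ≤ Real.exp (-(i:ℝ)*(ρ+1)) * ‖cq‖ ^ (-ρ) := by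
        rw [xpart_glue n d (aux_d_le n d hdn) A]
        calc |(A.mulVec cq + cp) ii|
            ≤ ‖A.mulVec cq + cp‖ := by
              simpa [Real.norm_eq_abs] using norm_le_pi_norm (A.mulVec cq + cp) ii
          _ ≤ _ := hb i
      calc Real.exp (((n:ℝ)-d)*t i) * |Xpart n d (aux_d_le n d hdn) A _ ii|
          ≤ Real.exp (((n:ℝ)-d)*t i) * (Real.exp (-(i:ℝ)*(ρ+1)) * ‖cq‖ ^ (-ρ)) :=
            mul_le_mul_of_nonneg_left hXle (Real.exp_pos _).le
        _ = Real.exp (-(i:ℝ)) * Real.exp (-(r * t i)) := by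
            rw [Real.rpow_def_of_pos hq0, ← Real.exp_add, ← Real.exp_add, ← Real.exp_add]
            congr 1
            have ht' : ((d:ℝ)-r) * t i = Real.log ‖cq‖ + (i:ℝ) := by
              rw [hts]
              simp only
              rw [mul_comm, div_mul_cancel₀ _ hdr.ne']
            linear_combination (-(t i)) * hkey + ρ * ht'
    · -- q part
      intro j
      have hQ : |Qpart n d (fun k => ((glue n d (pq i).1 (pq i).2 k : ℝ))) j| ≤ ‖cq‖ := by
        rw [qpart_glue]
        simpa [Real.norm_eq_abs] using norm_le_pi_norm cq j
      have hqexp : ‖cq‖ = Real.exp (((d:ℝ)-r) * t i + (-(i:ℝ))) := by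
        rw [Real.exp_add, hE i, mul_assoc, ← Real.exp_add]
        simp
        rfl
      calc Real.exp (-((d:ℝ) * t i)) * |Qpart n d _ j|
          ≤ Real.exp (-((d:ℝ) * t i)) * ‖cq‖ :=
            mul_le_mul_of_nonneg_left hQ (Real.exp_pos _).le
        _ = Real.exp (-(i:ℝ)) * Real.exp (-(r * t i)) := by
            rw [hqexp, ← Real.exp_add, ← Real.exp_add]
            congr 1
            ring

end Main
lemma dir21 (n d : ℕ) (hn : 3 ≤ n) (hd : 2 ≤ d) (hdn : d ≤ n - 1)
    (r : ℝ) (hr0 : 0 < r) (hrd : r < d)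
    (A : Matrix (Fin d) (Fin (n - d)) ℝ)
    (h : ∃ R : ℕ → ℝ, Tendsto R atTop (𝓝 0) ∧ ∃ t : ℕ → ℝ, Tendsto t atTop atTop ∧
      ∃ v : ℕ → (Fin n → ℤ), (∀ i, v i ≠ 0) ∧ ∀ i,
        ‖((btFlow n d (aux_d_pos d hd) (aux_d_le n d hdn) (d * t i) * gA n d A : SLn n) :
            Matrix (Fin n) (Fin n) ℝ).mulVec (fun j => ((v i j : ℝ)))‖
          ≤ R i * Real.exp (-(r * t i))) :
    MemW' (((n : ℝ) - d + r) / (d - r)) A := by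
  obtain ⟨R, hR, t, ht, v, hv, hbd⟩ := h
  intro C hC
  have hd0' : 0 < d := aux_d_pos d hd
  have hdn' : d ≤ n := aux_d_le n d hdn
  set ρ : ℝ := ((n : ℝ) - d + r) / (d - r) with hρ
  have hnd1 : (d:ℝ) + 1 ≤ (n:ℝ) := by exact_mod_cast (by omega : d + 1 ≤ n)
  have hdr : (0:ℝ) < (d:ℝ) - r := by linarith
  have hρ0 : 0 < ρ := div_pos (by linarith) hdr
  have hkey : ρ * ((d:ℝ) - r) = (n:ℝ) - d + r := div_mul_cancel₀ _ hdr.ne'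
  clear_value ρ
  set c0 : ℝ := C ^ ((1+ρ)⁻¹) with hc0
  have hc0pos : 0 < c0 := Real.rpow_pos_of_pos hC _
  set ε : ℝ := min c0 (1/2) with hε
  have hε0 : 0 < ε := lt_min hc0pos (by norm_num)
  have hev1 : ∀ᶠ i in atTop, R i < ε := hR.eventually (gt_mem_nhds hε0)
  have hev2 : ∀ᶠ i in atTop, 0 ≤ t i := ht.eventually_ge_atTop 0
  obtain ⟨i, hiR, hit⟩ := (hev1.and hev2).exists
  set cv : Fin n → ℝ := fun k => ((v i k : ℝ)) with hcv
  obtain ⟨hx, hq⟩ := btgA_norm_extract n d hd0' hdn' A (t i)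
    (R i * Real.exp (-(r * t i))) cv (hbd i)
  have hRpos : 0 < R i := by
    have hne0 : cv ≠ 0 := intvec_cast_ne _ (hv i)
    have hmne := sl_mulVec_ne n (btFlow n d hd0' hdn' ((d:ℝ) * t i) * gA n d A) cv hne0
    have hnpos : 0 < ‖((btFlow n d hd0' hdn' ((d:ℝ) * t i) * gA n d A : SLn n) :
        Matrix (Fin n) (Fin n) ℝ).mulVec cv‖ := norm_pos_iff.mpr hmne
    nlinarith [hbd i, Real.exp_pos (-(r * t i)),
      le_trans hnpos.le (hbd i)]
  have hxb : ∀ ii : Fin d, |Xpart n d hdn' A cv ii|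
      ≤ R i * Real.exp (-(((n:ℝ) - d + r) * t i)) := by
    intro ii
    calc |Xpart n d hdn' A cv ii|
        ≤ R i * Real.exp (-(r * t i) - ((n:ℝ)-d) * t i) := le_of_expmul (hx ii)
      _ = R i * Real.exp (-(((n:ℝ) - d + r) * t i)) := by congr 1; ring_nf
  have hqb : ∀ j : Fin (n-d), |Qpart n d cv j| ≤ R i * Real.exp (((d:ℝ) - r) * t i) := by
    intro j
    calc |Qpart n d cv j| ≤ R i * Real.exp (-(r * t i) - -((d:ℝ) * t i)) := le_of_expmul (hq j)
      _ = R i * Real.exp (((d:ℝ) - r) * t i) := by congr 1; ring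
  have hRhalf : R i < 1/2 := lt_of_lt_of_le hiR (min_le_right _ _)
  have hqne : qOf n d (v i) ≠ 0 := by
    intro hq0
    have hpne : pOf n d hdn' (v i) ≠ 0 := by
      intro hp0
      exact pq_of_ne n d hdn' (v i) (hv i) (Prod.ext hp0 hq0)
    obtain ⟨ii, hii⟩ := Function.ne_iff.mp hpne
    have h1le : (1:ℝ) ≤ |((pOf n d hdn' (v i) ii : ℤ) : ℝ)| := by
      exact_mod_cast Int.one_le_abs hii
    have hXii : Xpart n d hdn' A cv ii = ((pOf n d hdn' (v i) ii : ℝ)) := by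
      rw [xpart_cast n d hdn' A (v i) ii, hq0]
      have : (fun j => (((0 : Fin (n-d) → ℤ) j : ℝ))) = (0 : Fin (n-d) → ℝ) := by funext j; simp
      rw [this, Matrix.mulVec_zero]
      simp [pOf]
    have hb2 := hxb ii
    rw [hXii] at hb2
    have hexple : Real.exp (-(((n:ℝ)-d+r) * t i)) ≤ 1 := by
      rw [Real.exp_le_one_iff]
      nlinarith
    nlinarith [hb2, h1le, mul_le_of_le_one_right hRpos.le hexple]
  refine ⟨(pOf n d hdn' (v i), qOf n d (v i)), ?_, ?_⟩
  · intro hc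
    exact hqne (congrArg Prod.snd hc)
  · set cq : Fin (n-d) → ℝ := fun j => ((qOf n d (v i) j : ℝ)) with hcqdef
    set cp : Fin d → ℝ := fun i' => ((pOf n d hdn' (v i) i' : ℝ)) with hcpdef
    show ‖A.mulVec cq + cp‖ ≤ C * ‖cq‖ ^ (-ρ)
    have hq1 : 1 ≤ ‖cq‖ := intvec_one_le_norm _ hqne
    have hq0' : (0:ℝ) < ‖cq‖ := lt_of_lt_of_le one_pos hq1
    have hqnorm : ‖cq‖ ≤ R i * Real.exp (((d:ℝ)-r) * t i) := by
      rw [pi_norm_le_iff_of_nonneg (by positivity)]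
      intro j
      rw [Real.norm_eq_abs]
      exact hqb j
    have h2 : Real.exp (-(((d:ℝ)-r) * t i)) * ‖cq‖ ≤ R i := by
      calc Real.exp (-(((d:ℝ)-r) * t i)) * ‖cq‖
          ≤ Real.exp (-(((d:ℝ)-r) * t i)) * (R i * Real.exp (((d:ℝ)-r) * t i)) :=
            mul_le_mul_of_nonneg_left hqnorm (Real.exp_pos _).le
        _ = R i := by
            rw [mul_comm (R i), ← mul_assoc, ← Real.exp_add, neg_add_cancel, Real.exp_zero,
              one_mul]
    have h1 : Real.exp (-(((d:ℝ)-r) * t i)) ≤ R i / ‖cq‖ := (le_div_iff₀ hq0').mpr h2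
    have hc0C : c0 * c0 ^ ρ = C := by
      calc c0 * c0 ^ ρ = c0 ^ (1:ℝ) * c0 ^ ρ := by rw [Real.rpow_one]
        _ = c0 ^ ((1:ℝ) + ρ) := (Real.rpow_add hc0pos 1 ρ).symm
        _ = C ^ ((1+ρ)⁻¹ * (1+ρ)) := (Real.rpow_mul hC.le _ _).symm
        _ = C := by rw [inv_mul_cancel₀ (by positivity : (1:ℝ)+ρ ≠ 0), Real.rpow_one]
    have hstep : R i * Real.exp (-(((n:ℝ)-d+r) * t i)) ≤ C * ‖cq‖ ^ (-ρ) := by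
      calc R i * Real.exp (-(((n:ℝ)-d+r) * t i))
          = R i * Real.exp (-(((d:ℝ)-r) * t i)) ^ ρ := by
            rw [← Real.exp_mul]
            congr 2
            linear_combination (t i) * hkey
        _ ≤ R i * (R i / ‖cq‖) ^ ρ :=
            mul_le_mul_of_nonneg_left
              (Real.rpow_le_rpow (Real.exp_pos _).le h1 hρ0.le) hRpos.le
        _ = (R i * R i ^ ρ) * ‖cq‖ ^ (-ρ) := by
            rw [Real.div_rpow hRpos.le (norm_nonneg _), Real.rpow_neg (norm_nonneg _)]
            ring
        _ ≤ C * ‖cq‖ ^ (-ρ) := by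
            apply mul_le_mul_of_nonneg_right ?_ (Real.rpow_nonneg (norm_nonneg _) _)
            have hRle : R i ≤ c0 := le_trans hiR.le (min_le_left _ _)
            have hRρ : R i ^ ρ ≤ c0 ^ ρ := Real.rpow_le_rpow hRpos.le hRle hρ0.le
            calc R i * R i ^ ρ ≤ c0 * c0 ^ ρ :=
                mul_le_mul hRle hRρ (Real.rpow_nonneg hRpos.le _) hc0pos.le
              _ = C := hc0C
    rw [pi_norm_le_iff_of_nonneg (by positivity)]
    intro ii
    rw [Real.norm_eq_abs]
    have hXii : (A.mulVec cq + cp) ii = Xpart n d hdn' A cv ii :=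
      (xpart_cast n d hdn' A (v i) ii).symm
    rw [hXii]
    exact le_trans (hxb ii) hstep
lemma dir23 (n d : ℕ) (hn : 3 ≤ n) (hd : 2 ≤ d) (hdn : d ≤ n - 1)
    (r : ℝ) (hr0 : 0 < r) (hrd : r < d)
    (A : Matrix (Fin d) (Fin (n - d)) ℝ)
    (Ω : Set (SLn n)) (hΩc : IsCompact Ω) (hΩne : Ω.Nonempty)
    (hΩrow : ∀ ω ∈ Ω, ∀ j : Fin n, d ≤ (j : ℕ) →
      (ω : Matrix (Fin n) (Fin n) ℝ) ⟨0, aux_n_pos n hn⟩ j = 0)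
    (h : ∃ R : ℕ → ℝ, Tendsto R atTop (𝓝 0) ∧ ∃ t : ℕ → ℝ, Tendsto t atTop atTop ∧
      ∃ v : ℕ → (Fin n → ℤ), (∀ i, v i ≠ 0) ∧ ∀ i,
        ‖((btFlow n d (aux_d_pos d hd) (aux_d_le n d hdn) (d * t i) * gA n d A : SLn n) :
            Matrix (Fin n) (Fin n) ℝ).mulVec (fun j => ((v i j : ℝ)))‖
          ≤ R i * Real.exp (-(r * t i))) :
    ∃ C : ℕ → ℝ, Tendsto C atTop (𝓝 0) ∧ ∃ t : ℕ → ℝ, Tendsto t atTop atTop ∧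
      ∃ v : ℕ → (Fin n → ℤ), (∀ i, v i ≠ 0) ∧ ∀ i,
        (⨆ ω ∈ Ω, ‖((gtFlow n (aux_n_pos n hn) (t i) * ω * gA n d A : SLn n) :
            Matrix (Fin n) (Fin n) ℝ).mulVec (fun j => ((v i j : ℝ)))‖)
          ≤ C i * Real.exp (((d : ℝ) - r - 1) * t i) := by
  obtain ⟨R, hR, t, ht, v, hv, hbd⟩ := h
  have hd0' : 0 < d := aux_d_pos d hd
  have hdn' : d ≤ n := aux_d_le n d hdn
  have hn0 : 0 < n := aux_n_pos n hn
  have hnd1 : (d:ℝ) + 1 ≤ (n:ℝ) := by exact_mod_cast (by omega : d + 1 ≤ n)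
  obtain ⟨K, hK0, hKb⟩ := entry_bound n Ω hΩc hΩne
  -- shift the sequences so that t is nonnegative
  obtain ⟨N, hN⟩ := (ht.eventually_ge_atTop 0).exists_forall_of_atTop
  refine ⟨fun i => ((n:ℝ) * K + 1) * R (i + N), ?_, fun i => t (i + N), ?_,
    fun i => v (i + N), fun i => hv _, ?_⟩
  · have := (hR.comp (tendsto_add_atTop_nat N)).const_mul ((n:ℝ) * K + 1)
    simpa using this
  · exact ht.comp (tendsto_add_atTop_nat N)
  · intro i
    set i' := i + N with hi'
    have hti : 0 ≤ t i' := hN i' (by omega)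
    set cv : Fin n → ℝ := fun k => ((v i' k : ℝ)) with hcv
    obtain ⟨hx, hq⟩ := btgA_norm_extract n d hd0' hdn' A (t i')
      (R i' * Real.exp (-(r * t i'))) cv (hbd i')
    have hR0 : 0 ≤ R i' := by
      nlinarith [norm_nonneg (((btFlow n d hd0' hdn' ((d:ℝ) * t i') * gA n d A : SLn n) :
        Matrix (Fin n) (Fin n) ℝ).mulVec cv), hbd i', Real.exp_pos (-(r * t i'))]
    have hB0 : 0 ≤ ((n:ℝ) * K + 1) * R i' * Real.exp (((d : ℝ) - r - 1) * t i') := by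
      positivity
    -- bound on u = gA v
    set u : Fin n → ℝ := (gA n d A : Matrix (Fin n) (Fin n) ℝ).mulVec cv with hu
    have hub : ∀ k : Fin n, |u k| ≤ R i' * Real.exp (((d:ℝ) - r) * t i') := by
      intro k
      rw [hu, gA_mulVec n d hdn' A cv k]
      by_cases hk : (k:ℕ) < d
      · rw [dif_pos hk]
        have h1 : |Xpart n d hdn' A cv ⟨(k:ℕ), hk⟩|
            ≤ R i' * Real.exp (-(r * t i') - ((n:ℝ)-d) * t i') := le_of_expmul (hx _)
        refine le_trans h1 ?_
        apply mul_le_mul_of_nonneg_left ?_ hR0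
        apply Real.exp_le_exp.mpr
        nlinarith
      · rw [dif_neg hk]
        have hk2 : (k:ℕ) - d < n - d := by have := k.isLt; omega
        have h1 : |Qpart n d cv ⟨(k:ℕ) - d, hk2⟩|
            ≤ R i' * Real.exp (-(r * t i') - -((d:ℝ) * t i')) := le_of_expmul (hq _)
        have he : cv k = Qpart n d cv ⟨(k:ℕ) - d, hk2⟩ := by
          simp only [Qpart]
          congr 1
          exact (Fin.ext (by simp; omega)).symm
        rw [he]
        refine le_trans h1 ?_
        apply mul_le_mul_of_nonneg_left ?_ hR0
        apply Real.exp_le_exp.mpr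
        ring_nf
        nlinarith
    -- bound on first d coordinates of u (sharper)
    have hux : ∀ i0 : Fin d, |u ⟨(i0:ℕ), lt_of_lt_of_le i0.isLt hdn'⟩|
        ≤ R i' * Real.exp (-(((n:ℝ) - d + r) * t i')) := by
      intro i0
      have hk : ((⟨(i0:ℕ), lt_of_lt_of_le i0.isLt hdn'⟩ : Fin n) : ℕ) < d := i0.isLt
      rw [hu, gA_mulVec n d hdn' A cv _, dif_pos hk]
      have h1 : |Xpart n d hdn' A cv ⟨_, hk⟩|
          ≤ R i' * Real.exp (-(r * t i') - ((n:ℝ)-d) * t i') := le_of_expmul (hx _)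
      refine le_trans h1 (le_of_eq ?_)
      congr 1
      ring
    -- now bound the sup
    apply Real.iSup_le ?_ hB0
    intro ω
    apply Real.iSup_le ?_ hB0
    intro hω
    rw [pi_norm_le_iff_of_nonneg hB0]
    intro k
    have hdecomp : (((gtFlow n hn0 (t i') * ω * gA n d A : SLn n) :
        Matrix (Fin n) (Fin n) ℝ).mulVec cv) k
        = (if (k:ℕ) = 0 then Real.exp (((n:ℝ)-1) * t i') else Real.exp (-(t i')))
          * ((ω : Matrix (Fin n) (Fin n) ℝ).mulVec u) k := by
      rw [Matrix.SpecialLinearGroup.coe_mul, Matrix.SpecialLinearGroup.coe_mul,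
        ← Matrix.mulVec_mulVec, ← Matrix.mulVec_mulVec, ← hu]
      exact gt_mulVec n hn0 (t i') _ k
    rw [Real.norm_eq_abs, hdecomp, abs_mul]
    by_cases hk0 : (k:ℕ) = 0
    · rw [if_pos hk0, abs_of_pos (Real.exp_pos _)]
      have hkk : k = (⟨0, by omega⟩ : Fin n) := Fin.ext hk0
      have hrow := row_mulVec_head n d hdn' (ω : Matrix (Fin n) (Fin n) ℝ) k
        (by rw [hkk]; exact hΩrow ω hω) u
      rw [hrow]
      have habs : |∑ i0 : Fin d, (ω : Matrix (Fin n) (Fin n) ℝ) k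
            ⟨(i0:ℕ), lt_of_lt_of_le i0.isLt hdn'⟩ * u ⟨(i0:ℕ), lt_of_lt_of_le i0.isLt hdn'⟩|
          ≤ (d:ℝ) * (K * (R i' * Real.exp (-(((n:ℝ) - d + r) * t i')))) := by
        apply abs_sum_mul_le _ _ hK0
        · intro i0; exact hKb ω hω _ _
        · intro i0; exact hux i0
      calc Real.exp (((n:ℝ)-1) * t i') * |∑ i0 : Fin d, _ * _|
          ≤ Real.exp (((n:ℝ)-1) * t i')
            * ((d:ℝ) * (K * (R i' * Real.exp (-(((n:ℝ) - d + r) * t i'))))) :=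
            mul_le_mul_of_nonneg_left habs (Real.exp_pos _).le
        _ = ((d:ℝ) * K * R i') * (Real.exp (((n:ℝ)-1) * t i')
              * Real.exp (-(((n:ℝ) - d + r) * t i'))) := by ring
        _ = ((d:ℝ) * K * R i') * Real.exp (((d : ℝ) - r - 1) * t i') := by
            rw [← Real.exp_add]
            congr 2
            ring
        _ ≤ ((n:ℝ) * K + 1) * R i' * Real.exp (((d : ℝ) - r - 1) * t i') := by
            have : (d:ℝ) * K ≤ (n:ℝ) * K + 1 := by nlinarith
            nlinarith [Real.exp_pos (((d : ℝ) - r - 1) * t i'), hR0,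
              mul_le_mul_of_nonneg_right this hR0]
    · rw [if_neg hk0, abs_of_pos (Real.exp_pos _)]
      have habs : |((ω : Matrix (Fin n) (Fin n) ℝ).mulVec u) k|
          ≤ (n:ℝ) * (K * (R i' * Real.exp (((d:ℝ) - r) * t i'))) := by
        have : ((ω : Matrix (Fin n) (Fin n) ℝ).mulVec u) k
            = ∑ j : Fin n, (ω : Matrix (Fin n) (Fin n) ℝ) k j * u j := rfl
        rw [this]
        apply abs_sum_mul_le _ _ hK0
        · intro j; exact hKb ω hω _ _
        · intro j; exact hub j
      calc Real.exp (-(t i')) * |((ω : Matrix (Fin n) (Fin n) ℝ).mulVec u) k|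
          ≤ Real.exp (-(t i')) * ((n:ℝ) * (K * (R i' * Real.exp (((d:ℝ) - r) * t i')))) :=
            mul_le_mul_of_nonneg_left habs (Real.exp_pos _).le
        _ = ((n:ℝ) * K * R i') * (Real.exp (-(t i')) * Real.exp (((d:ℝ) - r) * t i')) := by
            ring
        _ = ((n:ℝ) * K * R i') * Real.exp (((d : ℝ) - r - 1) * t i') := by
            rw [← Real.exp_add]
            congr 2
            ring
        _ ≤ ((n:ℝ) * K + 1) * R i' * Real.exp (((d : ℝ) - r - 1) * t i') := by
            nlinarith [Real.exp_pos (((d : ℝ) - r - 1) * t i'), hR0,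
              mul_le_mul_of_nonneg_right
                (by nlinarith : (n:ℝ) * K ≤ (n:ℝ) * K + 1) hR0]
lemma dir32 (n d : ℕ) (hn : 3 ≤ n) (hd : 2 ≤ d) (hdn : d ≤ n - 1)
    (r : ℝ) (hr0 : 0 < r) (hrd : r < d)
    (A : Matrix (Fin d) (Fin (n - d)) ℝ)
    (Ω : Set (SLn n)) (hΩc : IsCompact Ω) (hΩne : Ω.Nonempty)
    (hΩrow : ∀ ω ∈ Ω, ∀ j : Fin n, d ≤ (j : ℕ) →
      (ω : Matrix (Fin n) (Fin n) ℝ) ⟨0, aux_n_pos n hn⟩ j = 0)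
    (hΩspan : Submodule.span ℝ
      {w : Fin d → ℝ | ∃ ω ∈ Ω, ∀ i : Fin d,
        w i = (ω : Matrix (Fin n) (Fin n) ℝ) ⟨0, aux_n_pos n hn⟩ (Fin.castLE (aux_d_le n d hdn) i)} = ⊤)
    (h : ∃ C : ℕ → ℝ, Tendsto C atTop (𝓝 0) ∧ ∃ t : ℕ → ℝ, Tendsto t atTop atTop ∧
      ∃ v : ℕ → (Fin n → ℤ), (∀ i, v i ≠ 0) ∧ ∀ i,
        (⨆ ω ∈ Ω, ‖((gtFlow n (aux_n_pos n hn) (t i) * ω * gA n d A : SLn n) :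
            Matrix (Fin n) (Fin n) ℝ).mulVec (fun j => ((v i j : ℝ)))‖)
          ≤ C i * Real.exp (((d : ℝ) - r - 1) * t i)) :
    ∃ R : ℕ → ℝ, Tendsto R atTop (𝓝 0) ∧ ∃ t : ℕ → ℝ, Tendsto t atTop atTop ∧
      ∃ v : ℕ → (Fin n → ℤ), (∀ i, v i ≠ 0) ∧ ∀ i,
        ‖((btFlow n d (aux_d_pos d hd) (aux_d_le n d hdn) (d * t i) * gA n d A : SLn n) :
            Matrix (Fin n) (Fin n) ℝ).mulVec (fun j => ((v i j : ℝ)))‖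
          ≤ R i * Real.exp (-(r * t i)) := by
  obtain ⟨C, hC, t, ht, v, hv, hbd⟩ := h
  have hd0' : 0 < d := aux_d_pos d hd
  have hdn' : d ≤ n := aux_d_le n d hdn
  have hn0 : 0 < n := aux_n_pos n hn
  have hnd1 : (d:ℝ) + 1 ≤ (n:ℝ) := by exact_mod_cast (by omega : d + 1 ≤ n)
  obtain ⟨s, M, hsS, hM0, hMb⟩ := span_bound d _ hΩspan
  obtain ⟨ω₀, hω₀⟩ := hΩne
  obtain ⟨K₀, hK₀0, hK₀b⟩ := matrix_entry_bound n ((ω₀⁻¹ : SLn n) : Matrix (Fin n) (Fin n) ℝ)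
  obtain ⟨N, hN⟩ := (ht.eventually_ge_atTop 0).exists_forall_of_atTop
  refine ⟨fun i => (M + (n:ℝ) * K₀) * C (i + N), ?_, fun i => t (i + N), ?_,
    fun i => v (i + N), fun i => hv _, ?_⟩
  · have := (hC.comp (tendsto_add_atTop_nat N)).const_mul (M + (n:ℝ) * K₀)
    simpa using this
  · exact ht.comp (tendsto_add_atTop_nat N)
  · intro i
    set i' := i + N with hi'
    have hti : 0 ≤ t i' := hN i' (by omega)
    set cv : Fin n → ℝ := fun k => ((v i' k : ℝ)) with hcv
    -- the function ω ↦ ‖g_t ω g_A v‖ and its continuity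
    set f : SLn n → ℝ := fun ω =>
      ‖((gtFlow n hn0 (t i') * ω * gA n d A : SLn n) :
          Matrix (Fin n) (Fin n) ℝ).mulVec cv‖ with hf
    have hfc : Continuous f := by
      have hfeq : f = fun ω : SLn n =>
          ‖(((gtFlow n hn0 (t i') : SLn n) : Matrix (Fin n) (Fin n) ℝ)
            * (ω : Matrix (Fin n) (Fin n) ℝ)
            * ((gA n d A : SLn n) : Matrix (Fin n) (Fin n) ℝ)).mulVec cv‖ := by
        funext ω
        rw [hf]
        simp only
        rw [Matrix.SpecialLinearGroup.coe_mul, Matrix.SpecialLinearGroup.coe_mul]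
      rw [hfeq]
      exact (((continuous_const.matrix_mul (sl_coe_continuous n)).matrix_mul
        continuous_const).matrix_mulVec continuous_const).norm
    have hfle : ∀ ω ∈ Ω, f ω ≤ C i' * Real.exp (((d : ℝ) - r - 1) * t i') := by
      intro ω hω
      exact le_trans (le_biSup_cont n Ω hΩc f hfc hω) (hbd i')
    have hB0 : 0 ≤ C i' * Real.exp (((d : ℝ) - r - 1) * t i') :=
      le_trans (norm_nonneg _) (hfle ω₀ hω₀)
    have hC0 : 0 ≤ C i' := by
      nlinarith [Real.exp_pos (((d : ℝ) - r - 1) * t i')]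
    -- u = gA v and z ω = ω u
    set u : Fin n → ℝ := (gA n d A : Matrix (Fin n) (Fin n) ℝ).mulVec cv with hu
    have hdecomp : ∀ ω : SLn n, ∀ k : Fin n,
        (((gtFlow n hn0 (t i') * ω * gA n d A : SLn n) :
          Matrix (Fin n) (Fin n) ℝ).mulVec cv) k
        = (if (k:ℕ) = 0 then Real.exp (((n:ℝ)-1) * t i') else Real.exp (-(t i')))
          * ((ω : Matrix (Fin n) (Fin n) ℝ).mulVec u) k := by
      intro ω k
      rw [Matrix.SpecialLinearGroup.coe_mul, Matrix.SpecialLinearGroup.coe_mul,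
        ← Matrix.mulVec_mulVec, ← Matrix.mulVec_mulVec, ← hu]
      exact gt_mulVec n hn0 (t i') _ k
    -- componentwise bounds on z ω for ω ∈ Ω
    have hzb : ∀ ω ∈ Ω, ∀ k : Fin n,
        |((ω : Matrix (Fin n) (Fin n) ℝ).mulVec u) k|
          ≤ C i' * Real.exp ((((d : ℝ) - r - 1) * t i')
              - (if (k:ℕ) = 0 then ((n:ℝ)-1) * t i' else -(t i'))) := by
      intro ω hω k
      have h1 : |(((gtFlow n hn0 (t i') * ω * gA n d A : SLn n) :
          Matrix (Fin n) (Fin n) ℝ).mulVec cv) k|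
          ≤ C i' * Real.exp (((d : ℝ) - r - 1) * t i') := by
        refine le_trans ?_ (hfle ω hω)
        rw [hf]
        simpa [Real.norm_eq_abs] using norm_le_pi_norm
          (((gtFlow n hn0 (t i') * ω * gA n d A : SLn n) :
            Matrix (Fin n) (Fin n) ℝ).mulVec cv) k
      rw [hdecomp ω k, abs_mul] at h1
      by_cases hk0 : (k:ℕ) = 0
      · rw [if_pos hk0, abs_of_pos (Real.exp_pos _)] at h1
        rw [if_pos hk0]
        exact le_of_expmul h1
      · rw [if_neg hk0, abs_of_pos (Real.exp_pos _)] at h1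
        rw [if_neg hk0]
        exact le_of_expmul h1
    -- z ω at coordinate 0 equals w_ω ⬝ᵥ X
    have hueq : ∀ i0 : Fin d, u ⟨(i0:ℕ), lt_of_lt_of_le i0.isLt hdn'⟩
        = Xpart n d hdn' A cv i0 := by
      intro i0
      rw [hu, gA_mulVec n d hdn' A cv _,
        dif_pos (show ((⟨(i0:ℕ), lt_of_lt_of_le i0.isLt hdn'⟩ : Fin n) : ℕ) < d from i0.isLt)]
      rfl
    -- bound on ‖X‖
    have hXcomp : ∀ ii : Fin d, |Xpart n d hdn' A cv ii|
        ≤ M * (C i' * Real.exp ((((d:ℝ) - r - n)) * t i')) := by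
      intro ii
      have hXnorm : ‖Xpart n d hdn' A cv‖
          ≤ M * (C i' * Real.exp ((((d:ℝ) - r - n)) * t i')) := by
        refine le_trans (hMb (Xpart n d hdn' A cv)) ?_
        apply mul_le_mul_of_nonneg_left ?_ hM0.le
        rw [pi_norm_le_iff_of_nonneg (by positivity)]
        intro w
        obtain ⟨ωw, hωw, hwi⟩ := hsS w.2
        have hzw := hzb ωw hωw ⟨0, by omega⟩
        rw [if_pos rfl] at hzw
        have hz0 : ((ωw : Matrix (Fin n) (Fin n) ℝ).mulVec u) ⟨0, by omega⟩
            = (w : Fin d → ℝ) ⬝ᵥ Xpart n d hdn' A cv := by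
          rw [row_mulVec_head n d hdn' _ _ (hΩrow ωw hωw) u]
          rw [dotProduct]
          apply Finset.sum_congr rfl
          intro i0 _
          rw [hueq i0, hwi i0]
          rfl
        rw [hz0] at hzw
        rw [Real.norm_eq_abs]
        refine le_trans hzw (le_of_eq ?_)
        congr 1
        ring
      have h9 : |Xpart n d hdn' A cv ii| ≤ ‖Xpart n d hdn' A cv‖ := by
        simpa [Real.norm_eq_abs] using norm_le_pi_norm (Xpart n d hdn' A cv) ii
      exact le_trans h9 hXnorm
    -- bound on Q via ω₀
    have huz : u = ((ω₀⁻¹ : SLn n) : Matrix (Fin n) (Fin n) ℝ).mulVec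
        ((ω₀ : Matrix (Fin n) (Fin n) ℝ).mulVec u) := by
      rw [Matrix.mulVec_mulVec, ← Matrix.SpecialLinearGroup.coe_mul, inv_mul_cancel,
        Matrix.SpecialLinearGroup.coe_one, Matrix.one_mulVec]
    have hz₀b : ∀ l : Fin n, |((ω₀ : Matrix (Fin n) (Fin n) ℝ).mulVec u) l|
        ≤ C i' * Real.exp (((d:ℝ) - r) * t i') := by
      intro l
      refine le_trans (hzb ω₀ hω₀ l) ?_
      apply mul_le_mul_of_nonneg_left ?_ hC0
      apply Real.exp_le_exp.mpr
      by_cases hl : (l:ℕ) = 0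
      · rw [if_pos hl]; nlinarith
      · rw [if_neg hl]; nlinarith
    have hucomp : ∀ k : Fin n, |u k|
        ≤ (n:ℝ) * (K₀ * (C i' * Real.exp (((d:ℝ) - r) * t i'))) := by
      intro k
      conv_lhs => rw [huz]
      have : (((ω₀⁻¹ : SLn n) : Matrix (Fin n) (Fin n) ℝ).mulVec
          ((ω₀ : Matrix (Fin n) (Fin n) ℝ).mulVec u)) k
          = ∑ l : Fin n, ((ω₀⁻¹ : SLn n) : Matrix (Fin n) (Fin n) ℝ) k l
            * ((ω₀ : Matrix (Fin n) (Fin n) ℝ).mulVec u) l := rfl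
      rw [this]
      apply abs_sum_mul_le _ _ hK₀0
      · intro l; exact hK₀b _ _
      · intro l; exact hz₀b l
    have hQcomp : ∀ j : Fin (n-d), |Qpart n d cv j|
        ≤ (n:ℝ) * (K₀ * (C i' * Real.exp (((d:ℝ) - r) * t i'))) := by
      intro j
      have hque : u ⟨d + (j:ℕ), by have := j.isLt; omega⟩ = Qpart n d cv j := by
        rw [hu, gA_mulVec n d hdn' A cv _, dif_neg (by simp)]
        rfl
      rw [← hque]
      exact hucomp _
    -- final bound
    apply btgA_norm_le_of n d hd0' hdn' A (t i') _ (by positivity)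
    · intro ii
      calc Real.exp (((n:ℝ)-d) * t i') * |Xpart n d hdn' A cv ii|
          ≤ Real.exp (((n:ℝ)-d) * t i')
            * (M * (C i' * Real.exp ((((d:ℝ) - r - n)) * t i'))) :=
            mul_le_mul_of_nonneg_left (hXcomp ii) (Real.exp_pos _).le
        _ = (M * C i') * (Real.exp (((n:ℝ)-d) * t i')
            * Real.exp ((((d:ℝ) - r - n)) * t i')) := by ring
        _ = (M * C i') * Real.exp (-(r * t i')) := by
            rw [← Real.exp_add]; congr 2; ring
        _ ≤ (M + (n:ℝ) * K₀) * C i' * Real.exp (-(r * t i')) := by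
            have h1 : M * C i' ≤ (M + (n:ℝ) * K₀) * C i' := by
              apply mul_le_mul_of_nonneg_right ?_ hC0
              nlinarith
            nlinarith [Real.exp_pos (-(r * t i'))]
    · intro j
      calc Real.exp (-((d:ℝ) * t i')) * |Qpart n d cv j|
          ≤ Real.exp (-((d:ℝ) * t i'))
            * ((n:ℝ) * (K₀ * (C i' * Real.exp (((d:ℝ) - r) * t i')))) :=
            mul_le_mul_of_nonneg_left (hQcomp j) (Real.exp_pos _).le
        _ = ((n:ℝ) * K₀ * C i') * (Real.exp (-((d:ℝ) * t i'))
            * Real.exp (((d:ℝ) - r) * t i')) := by ring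
        _ = ((n:ℝ) * K₀ * C i') * Real.exp (-(r * t i')) := by
            rw [← Real.exp_add]; congr 2; ring
        _ ≤ (M + (n:ℝ) * K₀) * C i' * Real.exp (-(r * t i')) := by
            have h1 : (n:ℝ) * K₀ * C i' ≤ (M + (n:ℝ) * K₀) * C i' := by
              apply mul_le_mul_of_nonneg_right ?_ hC0
              nlinarith
            nlinarith [Real.exp_pos (-(r * t i'))]
/-- **Lemma (interpretation of `W'_{(n-d+r)/(d-r)}(d, n-d)`).** -/
theorem interpretation_of_W'
    (n d : ℕ) (hn : 3 ≤ n) (hd : 2 ≤ d) (hdn : d ≤ n - 1)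
    (r : ℝ) (hr0 : 0 < r) (hrd : r < d)
    (A : Matrix (Fin d) (Fin (n - d)) ℝ)
    (Ω : Set (SLn n)) (hΩc : IsCompact Ω) (hΩne : Ω.Nonempty)
    (hΩrow : ∀ ω ∈ Ω, ∀ j : Fin n, d ≤ (j : ℕ) →
      (ω : Matrix (Fin n) (Fin n) ℝ) ⟨0, by omega⟩ j = 0)
    (hΩspan : Submodule.span ℝ
      {w : Fin d → ℝ | ∃ ω ∈ Ω, ∀ i : Fin d,
        w i = (ω : Matrix (Fin n) (Fin n) ℝ) ⟨0, by omega⟩ (Fin.castLE (by omega) i)} = ⊤) :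
    (MemW' (((n : ℝ) - d + r) / (d - r)) A ↔
      (∃ R : ℕ → ℝ, Tendsto R atTop (𝓝 0) ∧ ∃ t : ℕ → ℝ, Tendsto t atTop atTop ∧
        ∃ v : ℕ → (Fin n → ℤ), (∀ i, v i ≠ 0) ∧ ∀ i,
          ‖((btFlow n d (by omega) (by omega) (d * t i) * gA n d A : SLn n) :
              Matrix (Fin n) (Fin n) ℝ).mulVec (fun j => ((v i j : ℝ)))‖
            ≤ R i * Real.exp (-(r * t i)))) ∧
    ((∃ R : ℕ → ℝ, Tendsto R atTop (𝓝 0) ∧ ∃ t : ℕ → ℝ, Tendsto t atTop atTop ∧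
        ∃ v : ℕ → (Fin n → ℤ), (∀ i, v i ≠ 0) ∧ ∀ i,
          ‖((btFlow n d (by omega) (by omega) (d * t i) * gA n d A : SLn n) :
              Matrix (Fin n) (Fin n) ℝ).mulVec (fun j => ((v i j : ℝ)))‖
            ≤ R i * Real.exp (-(r * t i))) ↔
      (∃ C : ℕ → ℝ, Tendsto C atTop (𝓝 0) ∧ ∃ t : ℕ → ℝ, Tendsto t atTop atTop ∧
        ∃ v : ℕ → (Fin n → ℤ), (∀ i, v i ≠ 0) ∧ ∀ i,
          (⨆ ω ∈ Ω, ‖((gtFlow n (by omega) (t i) * ω * gA n d A : SLn n) :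
              Matrix (Fin n) (Fin n) ℝ).mulVec (fun j => ((v i j : ℝ)))‖)
            ≤ C i * Real.exp (((d : ℝ) - r - 1) * t i))) := by
  constructor
  · exact ⟨dir12 n d hn hd hdn r hr0 hrd A, dir21 n d hn hd hdn r hr0 hrd A⟩
  · exact ⟨dir23 n d hn hd hdn r hr0 hrd A Ω hΩc hΩne hΩrow,
      dir32 n d hn hd hdn r hr0 hrd A Ω hΩc hΩne hΩrow hΩspan⟩
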